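/- arXiv:2101.09800 — 3 statements merged into one kernel-verified Lean document; each statement's English description precedes it below -/
import Mathlib

section
/- As vector spaces, gl(n|n) decomposes as the direct sum gl(n|n) = p_n ⊕ b_n, where p_n is the periplectic Lie superalgebra and b_n is the butterfly subalgebra. -/
open Matrix BigOperators

/-- Index set {±1,...,±n}: `Sum.inl k` represents the negative index −(k+1) (odd),
`Sum.inr k` represents the positive index k+1 (even). -/
abbrev Idx (n : ℕ) := Fin n ⊕ Fin n

/-- parity: 1 for negative (odd) indices, 0 for positive (even) indices -/
def par {n : ℕ} : Idx n → ℕ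
  | Sum.inl _ => 1
  | Sum.inr _ => 0

/-- negation i ↦ −i -/
def ng {n : ℕ} : Idx n → Idx n := Sum.swap

/-- absolute value -/
def ab {n : ℕ} : Idx n → ℕ
  | Sum.inl k => (k : ℕ) + 1
  | Sum.inr k => (k : ℕ) + 1

def ppos {n : ℕ} (k : Fin n) : Idx n := Sum.inr k
def nneg {n : ℕ} (k : Fin n) : Idx n := Sum.inl k

/-- gl(n|n) as matrices indexed by {±1,...,±n} -/
abbrev gl (R : Type) [CommRing R] (n : ℕ) := Matrix (Idx n) (Idx n) R

variable (R : Type) [CommRing R] {n : ℕ}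

/-- elementary matrix E_ij -/
def E (i j : Idx n) : gl R n := Matrix.single i j 1

/-- 𝖤_ij = E_ij − (−1)^{p(i)(p(j)+1)} E_{−j,−i} -/
def Em (i j : Idx n) : gl R n :=
  E R i j - ((-1 : R) ^ (par i * (par j + 1))) • E R (ng j) (ng i)

/-- projection onto the parity-d component -/
def proj (d : ℕ) (X : gl R n) : gl R n :=
  fun i j => if (par i + par j) % 2 = d % 2 then X i j else 0

/-- the super bracket, extended bilinearly from homogeneous components:
[X,Y] = XY − (−1)^{|X||Y|} YX on homogeneous elements -/
def sbr (X Y : gl R n) : gl R n :=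
  X * Y - (proj R 0 Y * proj R 0 X + proj R 0 Y * proj R 1 X
    + proj R 1 Y * proj R 0 X - proj R 1 Y * proj R 1 X)

/-- the involution ι(X) = −π(X^st) -/
def iota (X : gl R n) : gl R n :=
  fun a b => -((-1 : R) ^ (par (ng b) * (par (ng a) + 1))) * X (ng b) (ng a)

/-- X is homogeneous of parity d -/
def IsHom (d : ℕ) (X : gl R n) : Prop :=
  ∀ i j, (par i + par j) % 2 ≠ d % 2 → X i j = 0

/-- supertrace -/
def Str (X : gl R n) : R := ∑ i, ((-1 : R) ^ (par i)) * X i i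

/-- supertrace form B(X,Y) = Str(XY) -/
def BF (X Y : gl R n) : R := Str R (X * Y)

/-- generators of the butterfly subalgebra b_n -/
def bGen (n : ℕ) : Set (gl R n) :=
  {M | (∃ i j : Idx n, ab i < ab j ∧ M = E R i j) ∨
       (∃ k : Fin n, M = E R (ppos k) (ppos k) + E R (nneg k) (nneg k)) ∨
       (∃ k : Fin n, M = E R (ppos k) (nneg k))}

/-- operators on the super tensor square -/
abbrev M2 (R : Type) [CommRing R] (n : ℕ) := Matrix (Idx n × Idx n) (Idx n × Idx n) R
/-- operators on the super tensor cube -/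
abbrev M3 (R : Type) [CommRing R] (n : ℕ) :=
  Matrix (Idx n × Idx n × Idx n) (Idx n × Idx n × Idx n) R

/-- super (Koszul-signed) tensor product A ⊗ B of matrices as an operator on V ⊗ V:
(A⊗B)(e_c ⊗ e_d) = (−1)^{|B| p(c)} A e_c ⊗ B e_d -/
def kron2 (A B : gl R n) : M2 R n :=
  fun x y => ((-1 : R) ^ ((par x.2 + par y.2) * par y.1)) * A x.1 y.1 * B x.2 y.2

/-- M acting on factors 1,2 of the super tensor cube -/
def lift12 (M : M2 R n) : M3 R n :=
  fun x y => if x.2.2 = y.2.2 then M (x.1, x.2.1) (y.1, y.2.1) else 0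

/-- M acting on factors 1,3 of the super tensor cube (with Koszul signs) -/
def lift13 (M : M2 R n) : M3 R n :=
  fun x y => if x.2.1 = y.2.1 then
    ((-1 : R) ^ ((par x.2.2 + par y.2.2) * par x.2.1)) * M (x.1, x.2.2) (y.1, y.2.2) else 0

/-- M acting on factors 2,3 of the super tensor cube (with Koszul signs) -/
def lift23 (M : M2 R n) : M3 R n :=
  fun x y => if x.1 = y.1 then
    ((-1 : R) ^ ((par x.2.1 + par y.2.1 + par x.2.2 + par y.2.2) * par x.1)) * M x.2 y.2 else 0

noncomputable section

namespace GlDS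

variable {n : ℕ}

/-- the sign appearing in `iota` -/
def S (i j : Idx n) : ℂ := -((-1 : ℂ) ^ (par (ng j) * (par (ng i) + 1)))

/-- the butterfly component of `X` -/
def Qm (X : gl ℂ n) : gl ℂ n := fun i j =>
  if ab i < ab j then X i j - S i j * X (ng j) (ng i)
  else
    match i, j with
    | Sum.inr k, Sum.inl l => if k = l then X i j else 0
    | Sum.inr k, Sum.inr l => if k = l then (X i j + X (ng i) (ng j)) / 2 else 0
    | Sum.inl k, Sum.inl l => if k = l then (X i j + X (ng i) (ng j)) / 2 else 0
    | Sum.inl _, Sum.inr _ => 0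

lemma upper_mem (M : gl ℂ n) (hM : ∀ a b, ¬ ab a < ab b → M a b = 0) :
    M ∈ Submodule.span ℂ (bGen ℂ n) := by
  rw [Matrix.matrix_eq_sum_single M]
  refine Submodule.sum_mem _ fun i _ => Submodule.sum_mem _ fun j _ => ?_
  by_cases h : ab i < ab j
  · have : Matrix.single i j (M i j) = M i j • E ℂ i j := by
      rw [E, Matrix.smul_single, smul_eq_mul, mul_one]
    rw [this]
    exact Submodule.smul_mem _ _ (Submodule.subset_span (Or.inl ⟨i, j, h, rfl⟩))
  · rw [hM i j h]
    simp

lemma Qm_mem (X : gl ℂ n) : Qm X ∈ Submodule.span ℂ (bGen ℂ n) := by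
  have key : Qm X = (Matrix.of fun a b => if ab a < ab b then Qm X a b else 0 : gl ℂ n)
      + ∑ k : Fin n, Qm X (Sum.inr k) (Sum.inl k) • E ℂ (ppos k) (nneg k)
      + ∑ k : Fin n, Qm X (Sum.inr k) (Sum.inr k) •
          (E ℂ (ppos k) (ppos k) + E ℂ (nneg k) (nneg k)) := by
    funext a b
    simp only [Matrix.add_apply, Matrix.sum_apply, Matrix.smul_apply, Matrix.of_apply,
      Matrix.single, E, ppos, nneg, Matrix.of_apply, smul_eq_mul]
    rcases a with a | a <;> rcases b with b | b
    · by_cases hab : a = b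
      · subst hab
        simp [Qm, ab, ng, Finset.sum_ite_eq]
        try ring
      · have h1 : ∀ x : Fin n, ¬ (x = a ∧ x = b) := fun x hx => hab (hx.1.symm.trans hx.2)
        by_cases hlt : a < b <;> simp [Qm, ab, hab, h1, hlt]
    · by_cases hlt : a < b <;> simp [Qm, ab, hlt]
    · by_cases hab : a = b
      · subst hab
        simp [Qm, ab, ng, Finset.sum_ite_eq]
        try ring
      · have h1 : ∀ x : Fin n, ¬ (x = a ∧ x = b) := fun x hx => hab (hx.1.symm.trans hx.2)
        by_cases hlt : a < b <;> simp [Qm, ab, hab, h1, hlt]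
    · by_cases hab : a = b
      · subst hab
        simp [Qm, ab, ng, Finset.sum_ite_eq]
        try ring
      · have h1 : ∀ x : Fin n, ¬ (x = a ∧ x = b) := fun x hx => hab (hx.1.symm.trans hx.2)
        by_cases hlt : a < b <;> simp [Qm, ab, hab, h1, hlt]
  rw [key]
  refine Submodule.add_mem _ (Submodule.add_mem _ ?_ ?_) ?_
  · refine upper_mem _ fun a b h => ?_
    simp [h]
  · refine Submodule.sum_mem _ fun k _ => Submodule.smul_mem _ _ ?_
    exact Submodule.subset_span (Or.inr (Or.inr ⟨k, rfl⟩))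
  · refine Submodule.sum_mem _ fun k _ => Submodule.smul_mem _ _ ?_
    exact Submodule.subset_span (Or.inr (Or.inl ⟨k, rfl⟩))

lemma iota_fixed (X : gl ℂ n) : iota ℂ (X - Qm X) = X - Qm X := by
  funext a b
  rcases a with a | a <;> rcases b with b | b <;>
    rcases lt_trichotomy a b with h | h | h <;>
    first
      | (subst h;
         simp [iota, Qm, S, ab, ng, par, Matrix.sub_apply];
         try ring)
      | (simp [iota, Qm, S, ab, ng, par, Matrix.sub_apply, h, h.ne, h.ne', h.asymm,
          Fin.val_fin_lt];
         try ring)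

lemma span_le_conds (X : gl ℂ n) (hmem : X ∈ Submodule.span ℂ (bGen ℂ n)) :
    (∀ a b, ab b < ab a → X a b = 0) ∧ (∀ k : Fin n, X (Sum.inl k) (Sum.inr k) = 0) ∧
      (∀ k : Fin n, X (Sum.inr k) (Sum.inr k) = X (Sum.inl k) (Sum.inl k)) := by
  let W : Submodule ℂ (gl ℂ n) :=
    { carrier := {M | (∀ a b, ab b < ab a → M a b = 0) ∧
        (∀ k : Fin n, M (Sum.inl k) (Sum.inr k) = 0) ∧
        (∀ k : Fin n, M (Sum.inr k) (Sum.inr k) = M (Sum.inl k) (Sum.inl k))}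
      add_mem' := by
        rintro M N ⟨h1, h2, h3⟩ ⟨g1, g2, g3⟩
        refine ⟨fun a b h => ?_, fun k => ?_, fun k => ?_⟩
        · simp [Matrix.add_apply, h1 _ _ h, g1 _ _ h]
        · simp [Matrix.add_apply, h2, g2]
        · simp [Matrix.add_apply, h3, g3]
      zero_mem' := by
        exact ⟨fun a b h => rfl, fun k => rfl, fun k => rfl⟩
      smul_mem' := by
        rintro c M ⟨h1, h2, h3⟩
        refine ⟨fun a b h => ?_, fun k => ?_, fun k => ?_⟩
        · simp [Matrix.smul_apply, h1 _ _ h]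
        · simp [Matrix.smul_apply, h2]
        · simp [Matrix.smul_apply, h3]
    }
  have hle : Submodule.span ℂ (bGen ℂ n) ≤ W := by
    rw [Submodule.span_le]
    rintro M (⟨i, j, hij, rfl⟩ | ⟨k, rfl⟩ | ⟨k, rfl⟩)
    · refine ⟨fun a b h => ?_, fun k => ?_, fun k => ?_⟩ <;>
        simp only [E, Matrix.single, Matrix.of_apply]
      · rw [if_neg]
        rintro ⟨rfl, rfl⟩
        exact absurd hij (lt_asymm h)
      · rw [if_neg]
        rintro ⟨rfl, rfl⟩
        exact lt_irrefl _ hij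
      · rw [if_neg, if_neg]
        · rintro ⟨rfl, rfl⟩
          exact lt_irrefl _ hij
        · rintro ⟨rfl, rfl⟩
          exact lt_irrefl _ hij
    · refine ⟨fun a b h => ?_, fun k' => ?_, fun k' => ?_⟩ <;>
        simp only [E, ppos, nneg, Matrix.add_apply, Matrix.single, Matrix.of_apply]
      · rcases a with a | a <;> rcases b with b | b <;>
          simp_all [ab] <;> (rintro rfl rfl; omega)
      · simp
      · by_cases hk : k = k' <;> simp [hk]
    · refine ⟨fun a b h => ?_, fun k' => ?_, fun k' => ?_⟩ <;>
        simp only [E, ppos, nneg, Matrix.single, Matrix.of_apply]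
      · rcases a with a | a <;> rcases b with b | b <;>
          simp_all [ab] <;> (rintro rfl rfl; omega)
      · simp
      · simp
  exact hle hmem

end GlDS

/-- gl(n|n) = p_n ⊕ b_n as vector spaces. -/
theorem gl_direct_sum_pn_bn (n : ℕ) :
    (∀ X : gl ℂ n, ∃ P Q : gl ℂ n,
      iota ℂ P = P ∧ Q ∈ Submodule.span ℂ (bGen ℂ n) ∧ X = P + Q) ∧
    (∀ X : gl ℂ n, iota ℂ X = X → X ∈ Submodule.span ℂ (bGen ℂ n) → X = 0) := by
  constructor
  · intro X
    refine ⟨X - GlDS.Qm X, GlDS.Qm X, GlDS.iota_fixed X, GlDS.Qm_mem X, ?_⟩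
    abel
  · intro X hfix hmem
    obtain ⟨h1, h2, h3⟩ := GlDS.span_le_conds X hmem
    have hfix' : ∀ a b, X a b
        = -((-1 : ℂ) ^ (par (ng b) * (par (ng a) + 1))) * X (ng b) (ng a) := by
      intro a b
      conv_lhs => rw [← hfix]
      rfl
    funext a b
    simp only [Matrix.zero_apply]
    rcases a with a | a <;> rcases b with b | b <;>
      rcases lt_trichotomy a b with h | h | h
    · have key := hfix' (Sum.inl a) (Sum.inl b)
      have hz : X (Sum.inr b) (Sum.inr a) = 0 := h1 _ _ (by simpa [ab] using h)
      simp only [ng, Sum.swap_inl, par, hz] at key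
      simpa using key
    · subst h
      have key := hfix' (Sum.inl a) (Sum.inl a)
      simp only [ng, Sum.swap_inl, par] at key
      rw [h3 a] at key
      norm_num at key
      linear_combination key / 2
    · exact h1 _ _ (by simpa [ab] using h)
    · have key := hfix' (Sum.inl a) (Sum.inr b)
      have hz : X (Sum.inl b) (Sum.inr a) = 0 := h1 _ _ (by simpa [ab] using h)
      simp only [ng, Sum.swap_inl, Sum.swap_inr, par, hz] at key
      simpa using key
    · subst h
      exact h2 a
    · exact h1 _ _ (by simpa [ab] using h)
    · have key := hfix' (Sum.inr a) (Sum.inl b)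
      have hz : X (Sum.inr b) (Sum.inl a) = 0 := h1 _ _ (by simpa [ab] using h)
      simp only [ng, Sum.swap_inl, Sum.swap_inr, par, hz] at key
      simpa using key
    · subst h
      have key := hfix' (Sum.inr a) (Sum.inl a)
      simp only [ng, Sum.swap_inl, Sum.swap_inr, par] at key
      norm_num at key
      linear_combination key / 2
    · exact h1 _ _ (by simpa [ab] using h)
    · have key := hfix' (Sum.inr a) (Sum.inr b)
      have hz : X (Sum.inl b) (Sum.inl a) = 0 := h1 _ _ (by simpa [ab] using h)
      simp only [ng, Sum.swap_inr, par, hz] at key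
      simpa using key
    · subst h
      have key := hfix' (Sum.inr a) (Sum.inr a)
      simp only [ng, Sum.swap_inr, par] at key
      rw [← h3 a] at key
      norm_num at key
      linear_combination key / 2
    · exact h1 _ _ (by simpa [ab] using h)
end
end

section
/- Let p be a finite-dimensional Lie superalgebra with a supersymmetric, invariant, non-degenerate bilinear form B, and let p_1, p_2 be isotropic Lie subsuperalgebras with p = p_1 ⊕ p_2 (a Manin supertriple). If {X_i} is a basis of p_1 and {X'_i} is the dual basis of p_2 (B(X'_i, X_j) = δ_ij), then s = Σ_i X_i ⊗ X'_i satisfies the classical Yang–Baxter equation [s_12, s_13] + [s_12, s_23] + [s_13, s_23] = 0 in U(p)^{⊗3}. -/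
open scoped TensorProduct BigOperators

noncomputable section

/-- membership in the even (`a % 2 = 0`) or odd part of a ℤ/2-graded space -/
def Hm {p : Type} [AddCommGroup p] [Module ℂ p] (p0 p1 : Submodule ℂ p) (a : ℕ) (x : p) :
    Prop :=
  x ∈ if a % 2 = 0 then p0 else p1

/-- signs only depend on parity -/
lemma negOnePow_congr_mod {m n : ℕ} (h : m % 2 = n % 2) : (-1 : ℂ) ^ m = (-1 : ℂ) ^ n := by
  conv_lhs => rw [← Nat.div_add_mod m 2]
  conv_rhs => rw [← Nat.div_add_mod n 2]
  rw [pow_add, pow_add, pow_mul, pow_mul]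
  norm_num [h]


/-- collapse a double sum of Kronecker deltas -/
lemma sum_delta₂ {ι : Type} [Fintype ι] [DecidableEq ι] (a c : ι) (F : ι → ι → ℂ) :
    (∑ x : ι, ∑ x1 : ι, (if a = x then if c = x1 then F x x1 else 0 else 0)) = F a c := by
  rw [Finset.sum_eq_single a]
  · rw [Finset.sum_eq_single c]
    · simp
    · intro b _ hb
      simp [Ne.symm hb]
    · simp
  · intro b _ hb
    simp [Ne.symm hb]
  · simp

/-- for a Manin supertriple (p, p₁, p₂) with dual homogeneous bases
{Xᵢ} of p₁ and {X'ᵢ} of p₂, the element s = Σᵢ Xᵢ ⊗ X'ᵢ satisfies the classical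
Yang–Baxter equation [s₁₂,s₁₃] + [s₁₂,s₂₃] + [s₁₃,s₂₃] = 0, written out in p ⊗ p ⊗ p
with the Koszul signs of the graded tensor product. -/
theorem manin_triple_CYBE
    {p : Type} [AddCommGroup p] [Module ℂ p] [FiniteDimensional ℂ p]
    (p0 p1 : Submodule ℂ p) (hgrading : IsCompl p0 p1)
    (br : p →ₗ[ℂ] p →ₗ[ℂ] p) (B : p →ₗ[ℂ] p →ₗ[ℂ] ℂ)
    (hbrgr : ∀ (a b : ℕ) (x y : p), Hm p0 p1 a x → Hm p0 p1 b y → Hm p0 p1 (a + b) (br x y))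
    (hanti : ∀ (a b : ℕ) (x y : p), Hm p0 p1 a x → Hm p0 p1 b y →
      br x y = -(((-1 : ℂ) ^ (a * b)) • br y x))
    (hjacobi : ∀ (a b : ℕ) (x y z : p), Hm p0 p1 a x → Hm p0 p1 b y →
      br x (br y z) = br (br x y) z + ((-1 : ℂ) ^ (a * b)) • br y (br x z))
    (hBsym : ∀ (a b : ℕ) (x y : p), Hm p0 p1 a x → Hm p0 p1 b y →
      B x y = ((-1 : ℂ) ^ (a * b)) * B y x)
    (hBeven : ∀ x ∈ p0, ∀ y ∈ p1, B x y = 0)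
    (hBinv : ∀ x y z : p, B (br x y) z = B x (br y z))
    (hBnondeg : ∀ x : p, (∀ y : p, B x y = 0) → x = 0)
    (q1 q2 : Submodule ℂ p)
    (hq1br : ∀ x ∈ q1, ∀ y ∈ q1, br x y ∈ q1)
    (hq2br : ∀ x ∈ q2, ∀ y ∈ q2, br x y ∈ q2)
    (hq1iso : ∀ x ∈ q1, ∀ y ∈ q1, B x y = 0)
    (hq2iso : ∀ x ∈ q2, ∀ y ∈ q2, B x y = 0)
    (hcompl : IsCompl q1 q2)
    (ι : Type) [Fintype ι] [DecidableEq ι] (X X' : ι → p) (d : ι → ℕ)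
    (hX1 : ∀ i, X i ∈ q1) (hX2 : ∀ i, X' i ∈ q2)
    (hXhom : ∀ i, Hm p0 p1 (d i) (X i)) (hX'hom : ∀ i, Hm p0 p1 (d i) (X' i))
    (hspan1 : Submodule.span ℂ (Set.range X) = q1)
    (hspan2 : Submodule.span ℂ (Set.range X') = q2)
    (hdual : ∀ i j, B (X' i) (X j) = if i = j then 1 else 0) :
    (∑ i : ι, ∑ j : ι,
      (((-1 : ℂ) ^ (d i * d j)) • (br (X i) (X j) ⊗ₜ[ℂ] (X' i ⊗ₜ[ℂ] X' j))
        + X i ⊗ₜ[ℂ] (br (X' i) (X j) ⊗ₜ[ℂ] X' j)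
        + ((-1 : ℂ) ^ (d i * d j)) • (X i ⊗ₜ[ℂ] (X j ⊗ₜ[ℂ] br (X' i) (X' j)))))
      = (0 : p ⊗[ℂ] (p ⊗[ℂ] p)) := by
  classical
  -- the form vanishes between parts of different parity
  have hBpar : ∀ (a b : ℕ) (x y : p), Hm p0 p1 a x → Hm p0 p1 b y → a % 2 ≠ b % 2 →
      B x y = 0 := by
    intro a b x y hx hy hab
    unfold Hm at hx hy
    rcases Nat.mod_two_eq_zero_or_one a with ha | ha <;>
      rcases Nat.mod_two_eq_zero_or_one b with hb | hb <;>
        rw [ha] at hx hab <;> rw [hb] at hy hab <;> simp at hx hy hab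
    · exact hBeven x hx y hy
    · rw [hBsym a b x y] <;> [skip; (unfold Hm; rw [ha]; simpa); (unfold Hm; rw [hb]; simpa)]
      rw [hBeven y hy x hx, mul_zero]
  -- symmetry of dual pairing
  have hdual' : ∀ i j, B (X i) (X' j) = if i = j then (-1 : ℂ) ^ (d i) else 0 := by
    intro i j
    rw [hBsym (d i) (d j) (X i) (X' j) (hXhom i) (hX'hom j), hdual]
    by_cases h : i = j
    · subst h
      simp [negOnePow_congr_mod (show (d i * d i) % 2 = d i % 2 by
        rcases Nat.mod_two_eq_zero_or_one (d i) with h | h <;> simp [Nat.mul_mod, h])]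
    · simp [h, Ne.symm h]
  -- the coordinate functionals
  set φ : (ι ⊕ ι) → (p →ₗ[ℂ] ℂ) :=
    Sum.elim (fun k => B (X' k)) (fun k => ((-1 : ℂ) ^ (d k)) • B (X k)) with hφdef
  have hφ1X : ∀ k j, φ (Sum.inl k) (X j) = if k = j then 1 else 0 := fun k j => hdual k j
  have hφ1X' : ∀ k j, φ (Sum.inl k) (X' j) = 0 := fun k j => hq2iso _ (hX2 k) _ (hX2 j)
  have hφ2X : ∀ k j, φ (Sum.inr k) (X j) = 0 := by
    intro k j
    simp [hφdef, hq1iso _ (hX1 k) _ (hX1 j)]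
  have hφ2X' : ∀ k j, φ (Sum.inr k) (X' j) = if k = j then 1 else 0 := by
    intro k j
    simp only [hφdef, Sum.elim_inr, LinearMap.smul_apply, smul_eq_mul, hdual' k j]
    by_cases h : k = j
    · subst h
      simp [← pow_add, negOnePow_congr_mod (show (d k + d k) % 2 = 0 % 2 by omega)]
    · simp [h]
  have hφ2br : ∀ k i j, φ (Sum.inr k) (br (X i) (X j)) = 0 := by
    intro k i j
    simp [hφdef, hq1iso _ (hX1 k) _ (hq1br _ (hX1 i) _ (hX1 j))]
  have hφ1br : ∀ k i j, φ (Sum.inl k) (br (X' i) (X' j)) = 0 := by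
    intro k i j
    exact hq2iso _ (hX2 k) _ (hq2br _ (hX2 i) _ (hX2 j))
  -- the basis
  have hφδ : ∀ a b', φ a (Sum.elim X X' b') = if a = b' then 1 else 0 := by
    rintro (a | a) (b' | b') <;>
      simp [hφ1X, hφ1X', hφ2X, hφ2X']
  have hindep : LinearIndependent ℂ (Sum.elim X X') := by
    rw [Fintype.linearIndependent_iff]
    intro g hg a
    have h := congrArg (φ a) hg
    simp only [map_sum, map_smul, smul_eq_mul, hφδ, mul_ite, mul_one, mul_zero,
      Finset.sum_ite_eq, Finset.mem_univ, if_true, map_zero] at h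
    exact h
  have hspan : ⊤ ≤ Submodule.span ℂ (Set.range (Sum.elim X X')) := by
    rw [Set.Sum.elim_range, Submodule.span_union, hspan1, hspan2, hcompl.sup_eq_top]
  set b := Module.Basis.mk hindep hspan with hbdef
  have hrepr : ∀ (x : p) a, b.repr x a = φ a x := by
    intro x a
    have h : ((Finsupp.lapply a).comp (b.repr : p →ₗ[ℂ] (ι ⊕ ι →₀ ℂ))) = φ a := by
      apply Module.Basis.ext b
      intro i
      simp only [LinearMap.comp_apply, Finsupp.lapply_apply, LinearEquiv.coe_coe,
        Module.Basis.repr_self]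
      rw [hbdef, Module.Basis.mk_apply, hφδ, Finsupp.single_apply]
      simp [eq_comm]
    exact (LinearMap.congr_fun h x :)
  -- reduce to coordinates
  set b3 := b.tensorProduct (b.tensorProduct b) with hb3def
  apply b3.repr.injective
  ext ⟨a, bb, c⟩
  simp only [map_sum, map_add, map_smul, Finsupp.coe_finset_sum, Finset.sum_apply,
    Finsupp.add_apply, Finsupp.smul_apply, map_zero, Finsupp.coe_zero, Pi.zero_apply,
    hb3def, Module.Basis.tensorProduct_repr_tmul_apply, smul_eq_mul, hrepr]
  -- the two key identities
  have key1 : ∀ a b c : ι,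
      (-1 : ℂ) ^ (d b * d c) * B (X' a) (br (X b) (X c))
        + (-1 : ℂ) ^ (d b) * B (X b) (br (X' a) (X c)) = 0 := by
    intro a b c
    have h1 : B (X' a) (br (X b) (X c)) = B (br (X' a) (X b)) (X c) := (hBinv _ _ _).symm
    have h2 : B (X b) (br (X' a) (X c)) = B (br (X b) (X' a)) (X c) := (hBinv _ _ _).symm
    have h3 : br (X b) (X' a) = -(((-1 : ℂ) ^ (d b * d a)) • br (X' a) (X b)) :=
      hanti _ _ _ _ (hXhom b) (hX'hom a)
    have hu : Hm p0 p1 (d a + d b) (br (X' a) (X b)) :=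
      hbrgr _ _ _ _ (hX'hom a) (hXhom b)
    rw [h1, h2, h3]
    simp only [map_neg, map_smul, LinearMap.neg_apply, LinearMap.smul_apply, smul_eq_mul]
    by_cases hpar : (d a + d b) % 2 = d c % 2
    · have hsg : (-1 : ℂ) ^ (d b * d c) = (-1 : ℂ) ^ (d b + d b * d a) := by
        apply negOnePow_congr_mod
        rcases Nat.mod_two_eq_zero_or_one (d a) with h1 | h1 <;>
          rcases Nat.mod_two_eq_zero_or_one (d b) with h2 | h2 <;>
            rcases Nat.mod_two_eq_zero_or_one (d c) with h3 | h3 <;>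
              simp [Nat.mul_mod, Nat.add_mod, h1, h2, h3] at hpar ⊢ <;> omega
      rw [hsg, pow_add]
      ring
    · rw [hBpar _ _ _ _ hu (hXhom c) hpar]
      ring
  have key2 : ∀ a b c : ι,
      B (X' b) (br (X' a) (X c))
        + (-1 : ℂ) ^ (d a * d b) * ((-1 : ℂ) ^ (d c) * B (X c) (br (X' a) (X' b))) = 0 := by
    intro a b c
    have h1 : B (X' b) (br (X' a) (X c)) = B (br (X' b) (X' a)) (X c) := (hBinv _ _ _).symm
    have h3 : br (X' b) (X' a) = -(((-1 : ℂ) ^ (d b * d a)) • br (X' a) (X' b)) :=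
      hanti _ _ _ _ (hX'hom b) (hX'hom a)
    have hu : Hm p0 p1 (d a + d b) (br (X' a) (X' b)) :=
      hbrgr _ _ _ _ (hX'hom a) (hX'hom b)
    have h2 : B (X c) (br (X' a) (X' b))
        = (-1 : ℂ) ^ (d c * (d a + d b)) * B (br (X' a) (X' b)) (X c) :=
      hBsym _ _ _ _ (hXhom c) hu
    rw [h1, h3, h2]
    simp only [map_neg, map_smul, LinearMap.neg_apply, LinearMap.smul_apply, smul_eq_mul]
    by_cases hpar : (d a + d b) % 2 = d c % 2
    · have hsg : (-1 : ℂ) ^ (d b * d a) = (-1 : ℂ) ^ (d a * d b + (d c + d c * (d a + d b))) := by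
        apply negOnePow_congr_mod
        rcases Nat.mod_two_eq_zero_or_one (d a) with h1 | h1 <;>
          rcases Nat.mod_two_eq_zero_or_one (d b) with h2 | h2 <;>
            rcases Nat.mod_two_eq_zero_or_one (d c) with h3 | h3 <;>
              simp [Nat.mul_mod, Nat.add_mod, h1, h2, h3] at hpar ⊢ <;> omega
      rw [hsg, pow_add, pow_add]
      ring
    · rw [hBpar _ _ _ _ hu (hXhom c) hpar]
      ring
  -- case analysis on the coordinate index
  rcases a with a | a <;> rcases bb with bb | bb <;> rcases c with c | c
  · -- (l, l, l)
    simp [hφ1X, hφ1X', hφ2X, hφ2X', hφ1br, hφ2br, mul_ite, ite_mul]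
  · -- (l, l, r) : key2
    simp only [hφ1X, hφ1X', hφ2X, hφ2X', hφ1br, hφ2br, mul_ite, ite_mul, mul_zero, zero_mul,
      mul_one, one_mul, Finset.sum_ite_eq, Finset.sum_ite_eq', Finset.mem_univ, if_true,
      Finset.sum_const_zero, add_zero, zero_add]
    simp only [Finset.sum_add_distrib, ite_self, Finset.sum_const_zero, add_zero, zero_add]
    rw [sum_delta₂, sum_delta₂]
    simp only [hφdef, Sum.elim_inl, Sum.elim_inr, LinearMap.smul_apply, smul_eq_mul]
    linear_combination key2 a bb c
  · -- (l, r, l)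
    simp [hφ1X, hφ1X', hφ2X, hφ2X', hφ1br, hφ2br, mul_ite, ite_mul]
  · -- (l, r, r) : key1
    simp only [hφ1X, hφ1X', hφ2X, hφ2X', hφ1br, hφ2br, mul_ite, ite_mul, mul_zero, zero_mul,
      mul_one, one_mul, Finset.sum_ite_eq, Finset.sum_ite_eq', Finset.mem_univ, if_true,
      Finset.sum_const_zero, add_zero, zero_add]
    simp only [Finset.sum_add_distrib, ite_self, Finset.sum_const_zero, add_zero, zero_add]
    rw [sum_delta₂, sum_delta₂]
    simp only [hφdef, Sum.elim_inl, Sum.elim_inr, LinearMap.smul_apply, smul_eq_mul]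
    linear_combination key1 a bb c
  all_goals
    simp [hφ1X, hφ1X', hφ2X, hφ2X', hφ1br, hφ2br, mul_ite, ite_mul]
end
end

section
/- On (C(q)^{(n|n)})^{⊗3}, the operators c_i (i = 1, 2), obtained by applying c = Σ_{a,b}(−1)^{p(a)p(b)}E_ab⊗E_{−a,−b} to the i-th and (i+1)-th tensor factors, satisfy the relations c_2 c_1 c_2 = −c_2 and c_1 c_2 c_1 = −c_1. -/
open Matrix BigOperators

variable (R : Type) [CommRing R] {n : ℕ}

noncomputable section

set_option synthInstance.maxHeartbeats 1000000
set_option maxHeartbeats 2000000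

/-- the field ℂ(q) -/
abbrev Kq := RatFunc ℂ

/-- the variable q ∈ ℂ(q) -/
def qv : Kq := RatFunc.X

/-- the R-matrix S of type P over ℂ(q) -/
def SEl (n : ℕ) : M2 Kq n :=
  1
  + (∑ k : Fin n, kron2 Kq
      ((qv - 1) • E Kq (ppos k) (ppos k) + (qv⁻¹ - 1) • E Kq (nneg k) (nneg k))
      (E Kq (ppos k) (ppos k) + E Kq (nneg k) (nneg k)))
  + ((qv - qv⁻¹) / 2) • (∑ k : Fin n, kron2 Kq (Em Kq (nneg k) (ppos k)) (E Kq (ppos k) (nneg k)))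
  + (qv - qv⁻¹) • (∑ i : Idx n, ∑ j : Idx n,
      if ab j < ab i then ((-1 : Kq) ^ (par j)) • kron2 Kq (Em Kq i j) (E Kq j i) else 0)

/-- the contraction operator c = Σ_{a,b} (−1)^{p(a)p(b)} E_ab ⊗ E_{−a,−b} -/
def cOp (n : ℕ) : M2 Kq n :=
  ∑ a : Idx n, ∑ b : Idx n,
    ((-1 : Kq) ^ (par a * par b)) • kron2 Kq (E Kq a b) (E Kq (ng a) (ng b))

/-- the super-permutation operator P = Σ_{a,b} (−1)^{p(b)} E_ab ⊗ E_ba -/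
def POp (n : ℕ) : M2 Kq n :=
  ∑ a : Idx n, ∑ b : Idx n, ((-1 : Kq) ^ (par b)) • kron2 Kq (E Kq a b) (E Kq b a)

section AuxProof

variable {n : ℕ}

@[simp] lemma ng_ng' (i : Idx n) : ng (ng i) = i := by cases i <;> rfl

lemma sgn_ng (i : Idx n) :
    ((-1 : Kq)) ^ (par (ng i)) * (-1 : Kq) ^ (par i) = -1 := by
  cases i <;> simp [par, ng, Sum.swap]

lemma cOp_apply (x1 x2 y1 y2 : Idx n) :
    cOp n (x1, x2) (y1, y2)
      = if x2 = ng x1 ∧ y2 = ng y1 then (-1 : Kq) ^ (par y1) else 0 := by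
  classical
  have expand : ∀ a b : Idx n,
      (((-1 : Kq) ^ (par a * par b)) • kron2 Kq (E Kq a b) (E Kq (ng a) (ng b)))
          (x1, x2) (y1, y2)
        = if b = y1 ∧ a = x1 then
            ((-1 : Kq) ^ (par a * par b)) * (-1 : Kq) ^ ((par x2 + par y2) * par y1) *
              (if x2 = ng a ∧ y2 = ng b then 1 else 0)
          else 0 := by
    intro a b
    simp only [Matrix.smul_apply, smul_eq_mul, kron2, E, Matrix.single,
      Matrix.of_apply]
    by_cases h1 : a = x1 <;> by_cases h2 : b = y1 <;>
      by_cases h3 : x2 = ng a <;> by_cases h4 : y2 = ng b <;>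
      simp [h1, h2, h3, h4, eq_comm] <;> ring
  have hsum : cOp n (x1, x2) (y1, y2)
      = ∑ a : Idx n, ∑ b : Idx n,
          if b = y1 ∧ a = x1 then
            ((-1 : Kq) ^ (par a * par b)) * (-1 : Kq) ^ ((par x2 + par y2) * par y1) *
              (if x2 = ng a ∧ y2 = ng b then 1 else 0)
          else 0 := by
    simp only [cOp, Matrix.sum_apply]
    exact Finset.sum_congr rfl fun a _ => Finset.sum_congr rfl fun b _ => expand a b
  rw [hsum]
  simp only [ite_and, Finset.sum_ite_eq, Finset.sum_ite_eq', Finset.mem_univ, if_true]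
  by_cases h1 : x2 = ng x1 <;> by_cases h2 : y2 = ng y1
  · subst h1; subst h2
    simp only [and_self, if_true, eq_self_iff_true, mul_one]
    cases x1 <;> cases y1 <;> simp [par, ng] <;> norm_num
  · simp [h1, h2]
  · simp [h1, h2]
  · simp [h1, h2]

lemma L23_apply (x1 x2 x3 y1 y2 y3 : Idx n) :
    lift23 Kq (cOp n) (x1, x2, x3) (y1, y2, y3)
      = if x1 = y1 ∧ x3 = ng x2 ∧ y3 = ng y2 then (-1 : Kq) ^ (par y2) else 0 := by
  simp only [lift23, cOp_apply]
  by_cases h1 : x1 = y1 <;> by_cases h2 : x3 = ng x2 <;> by_cases h3 : y3 = ng y2 <;>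
    simp [h1, h2, h3]
  subst h2; subst h3
  cases x2 <;> cases y2 <;> simp [par, ng] <;> rw [pow_mul] <;> norm_num

lemma L12_apply (x1 x2 x3 y1 y2 y3 : Idx n) :
    lift12 Kq (cOp n) (x1, x2, x3) (y1, y2, y3)
      = if x3 = y3 ∧ x2 = ng x1 ∧ y2 = ng y1 then (-1 : Kq) ^ (par y1) else 0 := by
  simp only [lift12, cOp_apply]
  by_cases h1 : x3 = y3 <;> by_cases h2 : x2 = ng x1 <;> by_cases h3 : y2 = ng y1 <;>
    simp [h1, h2, h3]

lemma C2C1_apply (x1 x2 x3 z1 z2 z3 : Idx n) :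
    (lift23 Kq (cOp n) * lift12 Kq (cOp n)) (x1, x2, x3) (z1, z2, z3)
      = if x3 = ng x2 ∧ x1 = z3 ∧ z2 = ng z1 then
          (-1 : Kq) ^ (par (ng x1)) * (-1 : Kq) ^ (par z1) else 0 := by
  classical
  rw [Matrix.mul_apply]
  have key : ∀ w : Idx n × Idx n × Idx n, w ≠ (x1, ng x1, x1) →
      lift23 Kq (cOp n) (x1, x2, x3) w * lift12 Kq (cOp n) w (z1, z2, z3) = 0 := by
    rintro ⟨w1, w2, w3⟩ hw
    rw [L23_apply, L12_apply]
    split_ifs with h1 h2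
    · exfalso; apply hw
      obtain ⟨rfl, -, rfl⟩ := h1
      obtain ⟨-, rfl, -⟩ := h2
      simp
    all_goals simp
  rw [Fintype.sum_eq_single _ key, L23_apply, L12_apply]
  simp only [ng_ng', and_true, true_and]
  by_cases h1 : x3 = ng x2 <;> by_cases h2 : x1 = z3 <;> by_cases h3 : z2 = ng z1 <;>
    simp [h1, h2, h3]

lemma C1C2_apply (x1 x2 x3 z1 z2 z3 : Idx n) :
    (lift12 Kq (cOp n) * lift23 Kq (cOp n)) (x1, x2, x3) (z1, z2, z3)
      = if x2 = ng x1 ∧ x3 = z1 ∧ z3 = ng z2 then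
          (-1 : Kq) ^ (par x3) * (-1 : Kq) ^ (par z2) else 0 := by
  classical
  rw [Matrix.mul_apply]
  have key : ∀ w : Idx n × Idx n × Idx n, w ≠ (x3, ng x3, x3) →
      lift12 Kq (cOp n) (x1, x2, x3) w * lift23 Kq (cOp n) w (z1, z2, z3) = 0 := by
    rintro ⟨w1, w2, w3⟩ hw
    rw [L12_apply, L23_apply]
    split_ifs with h1 h2
    · exfalso; apply hw
      obtain ⟨h13, -, rfl⟩ := h1
      obtain ⟨-, h22, -⟩ := h2
      simp_all
    all_goals simp
  rw [Fintype.sum_eq_single _ key, L12_apply, L23_apply]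
  simp only [ng_ng', and_true, true_and]
  by_cases h1 : x2 = ng x1 <;> by_cases h2 : x3 = z1 <;> by_cases h3 : z3 = ng z2 <;>
    simp [h1, h2, h3]

end AuxProof

/-- c₂c₁c₂ = −c₂ and c₁c₂c₁ = −c₁ on the super tensor cube. -/
theorem c_braid_relations (n : ℕ) :
    lift23 Kq (cOp n) * lift12 Kq (cOp n) * lift23 Kq (cOp n) = -lift23 Kq (cOp n) ∧
    lift12 Kq (cOp n) * lift23 Kq (cOp n) * lift12 Kq (cOp n) = -lift12 Kq (cOp n) := by
  classical
  constructor
  · ext ⟨x1, x2, x3⟩ ⟨y1, y2, y3⟩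
    rw [Matrix.mul_apply]
    have key : ∀ z : Idx n × Idx n × Idx n, z ≠ (x1, ng x1, x1) →
        (lift23 Kq (cOp n) * lift12 Kq (cOp n)) (x1, x2, x3) z
          * lift23 Kq (cOp n) z (y1, y2, y3) = 0 := by
      rintro ⟨z1, z2, z3⟩ hz
      rw [C2C1_apply, L23_apply]
      split_ifs with h1 h2
      · exfalso; apply hz
        obtain ⟨-, h13, rfl⟩ := h1
        obtain ⟨-, h23, -⟩ := h2
        simp_all
      all_goals simp
    rw [Fintype.sum_eq_single _ key, C2C1_apply, L23_apply, Matrix.neg_apply, L23_apply]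
    simp only [ng_ng', and_true, true_and]
    by_cases h1 : x3 = ng x2 <;> by_cases h2 : x1 = y1 <;> by_cases h3 : y3 = ng y2 <;>
      simp [h1, h2, h3, eq_comm (a := x1) (b := y1)]
    rw [sgn_ng]; ring
  · ext ⟨x1, x2, x3⟩ ⟨y1, y2, y3⟩
    rw [Matrix.mul_apply]
    have key : ∀ z : Idx n × Idx n × Idx n, z ≠ (x3, ng x3, x3) →
        (lift12 Kq (cOp n) * lift23 Kq (cOp n)) (x1, x2, x3) z
          * lift12 Kq (cOp n) z (y1, y2, y3) = 0 := by
      rintro ⟨z1, z2, z3⟩ hz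
      rw [C1C2_apply, L12_apply]
      split_ifs with h1 h2
      · exfalso; apply hz
        obtain ⟨-, rfl, h13⟩ := h1
        obtain ⟨-, rfl, -⟩ := h2
        simp_all
      all_goals simp
    rw [Fintype.sum_eq_single _ key, C1C2_apply, L12_apply, Matrix.neg_apply, L12_apply]
    simp only [ng_ng', and_true, true_and]
    by_cases h1 : x2 = ng x1 <;> by_cases h2 : x3 = y3 <;> by_cases h3 : y2 = ng y1 <;>
      simp [h1, h2, h3, eq_comm (a := x3) (b := y3)]
    rw [mul_comm ((-1 : Kq) ^ par y3), sgn_ng]; ring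
end
end
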